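/- arXiv:2003.10588 — 3 statements merged into one kernel-verified Lean document; each statement's English description precedes it below -/
import Mathlib

section
/- Sketching error composes additively under pairwise-sum product: if (1−β)△A(t) ≤ △A'(t) ≤ △A(t) and (1−γ)△B(t) ≤ △B'(t) ≤ △B(t) for all t, then for D = A ⊓ B and D' = A' ⊓ B' we have (1−β−γ)·△D(t) ≤ △D'(t) ≤ △D(t) for all t ∈ ℝ. -/
/-- Finite multisets of reals, represented by their multiplicity function. -/
abbrev MSet := ℝ →₀ ℕ

/-- Pairwise-sum product: #(A ⊓ B)(e) = Σ_i #A(e−i)·#B(i). -/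
noncomputable def mprod (A B : MSet) : MSet :=
  A.sum fun a m => B.sum fun b n => Finsupp.single (a + b) (m * n)

/-- △A(t): the number of elements of `A` that are ≤ t, counted with multiplicity. -/
noncomputable def tri (A : MSet) (t : ℝ) : ℕ :=
  ∑ e ∈ A.support.filter (fun e => e ≤ t), A e


noncomputable def T (t : ℝ) : MSet →+ ℕ :=
  Finsupp.liftAddHom (fun e => if e ≤ t then AddMonoidHom.id ℕ else 0)

lemma tri_eq (A : MSet) (t : ℝ) : tri A t = ∑ e ∈ A.support, if e ≤ t then A e else 0 := by
  rw [tri, Finset.sum_filter]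

lemma T_apply (A : MSet) (t : ℝ) : T t A = tri A t := by
  rw [T, Finsupp.liftAddHom_apply, tri_eq, Finsupp.sum]
  refine Finset.sum_congr rfl fun e _ => ?_
  by_cases h : e ≤ t <;> simp [h]

lemma tri_mprod (X Y : MSet) (t : ℝ) :
    tri (mprod X Y) t = ∑ a ∈ X.support, ∑ b ∈ Y.support,
      if a + b ≤ t then X a * Y b else 0 := by
  rw [← T_apply, mprod, map_finsuppSum, Finsupp.sum]
  refine Finset.sum_congr rfl fun a _ => ?_
  rw [map_finsuppSum, Finsupp.sum]
  refine Finset.sum_congr rfl fun b _ => ?_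
  rw [T, Finsupp.liftAddHom_apply_single]
  by_cases h : a + b ≤ t <;> simp [h]

lemma tri_mprod_left (X Y : MSet) (t : ℝ) :
    tri (mprod X Y) t = ∑ a ∈ X.support, X a * tri Y (t - a) := by
  rw [tri_mprod]
  refine Finset.sum_congr rfl fun a _ => ?_
  rw [tri_eq, Finset.mul_sum]
  refine Finset.sum_congr rfl fun b _ => ?_
  have : a + b ≤ t ↔ b ≤ t - a := by constructor <;> intro h <;> linarith
  by_cases h : b ≤ t - a <;> simp [this, h, mul_comm]

lemma tri_mprod_right (X Y : MSet) (t : ℝ) :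
    tri (mprod X Y) t = ∑ b ∈ Y.support, Y b * tri X (t - b) := by
  rw [tri_mprod, Finset.sum_comm]
  refine Finset.sum_congr rfl fun b _ => ?_
  rw [tri_eq, Finset.mul_sum]
  refine Finset.sum_congr rfl fun a _ => ?_
  have : a + b ≤ t ↔ a ≤ t - b := by constructor <;> intro h <;> linarith
  by_cases h : a ≤ t - b <;> simp [this, h, mul_comm]

lemma le_tri_self {A : MSet} {a : ℝ} (ha : a ∈ A.support) : A a ≤ tri A a := by
  refine Finset.single_le_sum (f := fun e => A e) (fun _ _ => Nat.zero_le _) ?_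
  simp [Finset.mem_filter, ha]

lemma eq_zero_of_tri_eq_zero {A : MSet} (h : ∀ t, tri A t = 0) : A = 0 := by
  ext a
  simp only [Finsupp.coe_zero, Pi.zero_apply]
  by_cases ha : a ∈ A.support
  · have h1 := le_tri_self ha
    rw [h a] at h1
    omega
  · exact Finsupp.notMem_support_iff.mp ha

theorem sketch_mprod_error (A B A' B' : MSet) (β γ : ℝ)
    (hA : ∀ t : ℝ, (1 - β) * (tri A t : ℝ) ≤ (tri A' t : ℝ) ∧ (tri A' t : ℝ) ≤ (tri A t : ℝ))
    (hB : ∀ t : ℝ, (1 - γ) * (tri B t : ℝ) ≤ (tri B' t : ℝ) ∧ (tri B' t : ℝ) ≤ (tri B t : ℝ)) :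
    ∀ t : ℝ,
      (1 - β - γ) * (tri (mprod A B) t : ℝ) ≤ (tri (mprod A' B') t : ℝ) ∧
        (tri (mprod A' B') t : ℝ) ≤ (tri (mprod A B) t : ℝ) := by
  -- natural-number versions of the one-sided bounds
  have hA2 : ∀ t, tri A' t ≤ tri A t := fun t => Nat.cast_le.mp (hA t).2
  have hB2 : ∀ t, tri B' t ≤ tri B t := fun t => Nat.cast_le.mp (hB t).2
  intro t
  -- upper bound, entirely in ℕ
  have upper : tri (mprod A' B') t ≤ tri (mprod A B) t := by
    calc tri (mprod A' B') t = ∑ b ∈ B'.support, B' b * tri A' (t - b) :=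
          tri_mprod_right A' B' t
      _ ≤ ∑ b ∈ B'.support, B' b * tri A (t - b) :=
          Finset.sum_le_sum fun b _ => Nat.mul_le_mul_left _ (hA2 _)
      _ = tri (mprod A B') t := (tri_mprod_right A B' t).symm
      _ = ∑ a ∈ A.support, A a * tri B' (t - a) := tri_mprod_left A B' t
      _ ≤ ∑ a ∈ A.support, A a * tri B (t - a) :=
          Finset.sum_le_sum fun a _ => Nat.mul_le_mul_left _ (hB2 _)
      _ = tri (mprod A B) t := (tri_mprod_left A B t).symm
  refine ⟨?_, Nat.cast_le.mpr upper⟩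
  -- lower bound
  by_cases hc : 1 - β - γ ≤ 0
  · have : (0:ℝ) ≤ tri (mprod A B) t := Nat.cast_nonneg _
    nlinarith [Nat.cast_nonneg (α := ℝ) (tri (mprod A' B') t)]
  push_neg at hc
  -- dispose of the degenerate cases A = 0 or B = 0
  by_cases hA0 : A = 0
  · have hA'0 : A' = 0 := by
      refine eq_zero_of_tri_eq_zero fun s => Nat.le_zero.mp ?_
      have := hA2 s
      simpa [hA0, tri, Finsupp.support_zero] using this
    have h1 : mprod A B = 0 := by simp [mprod, hA0]
    have h2 : mprod A' B' = 0 := by simp [mprod, hA'0]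
    simp [h1, h2, tri]
  by_cases hB0 : B = 0
  · have hB'0 : B' = 0 := by
      refine eq_zero_of_tri_eq_zero fun s => Nat.le_zero.mp ?_
      have := hB2 s
      simpa [hB0, tri, Finsupp.support_zero] using this
    have h1 : mprod A B = 0 := by
      simp [mprod, hB0, Finsupp.sum_zero_index, Finsupp.sum]
    have h2 : mprod A' B' = 0 := by
      simp [mprod, hB'0, Finsupp.sum_zero_index, Finsupp.sum]
    simp [h1, h2, tri]
  -- β ≥ 0 and γ ≥ 0
  have hβ0 : 0 ≤ β := by
    obtain ⟨a, ha⟩ := Finsupp.support_nonempty_iff.mpr hA0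
    have h1 : 0 < A a := Nat.pos_of_ne_zero (Finsupp.mem_support_iff.mp ha)
    have h2 : 0 < tri A a := lt_of_lt_of_le h1 (le_tri_self ha)
    have h3 : (0:ℝ) < tri A a := by exact_mod_cast h2
    have := (hA a).1
    have := (hA a).2
    nlinarith
  have hγ0 : 0 ≤ γ := by
    obtain ⟨b, hb⟩ := Finsupp.support_nonempty_iff.mpr hB0
    have h1 : 0 < B b := Nat.pos_of_ne_zero (Finsupp.mem_support_iff.mp hb)
    have h2 : 0 < tri B b := lt_of_lt_of_le h1 (le_tri_self hb)
    have h3 : (0:ℝ) < tri B b := by exact_mod_cast h2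
    have := (hB b).1
    have := (hB b).2
    nlinarith
  have hβ1 : (0:ℝ) ≤ 1 - β := by linarith
  -- the chain of inequalities over ℝ
  have e1 : (tri (mprod A' B') t : ℝ) = ∑ b ∈ B'.support, (B' b : ℝ) * (tri A' (t - b) : ℝ) := by
    rw [tri_mprod_right]; push_cast; rfl
  have e2 : (tri (mprod A B') t : ℝ) = ∑ b ∈ B'.support, (B' b : ℝ) * (tri A (t - b) : ℝ) := by
    rw [tri_mprod_right]; push_cast; rfl
  have e3 : (tri (mprod A B') t : ℝ) = ∑ a ∈ A.support, (A a : ℝ) * (tri B' (t - a) : ℝ) := by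
    rw [tri_mprod_left]; push_cast; rfl
  have e4 : (tri (mprod A B) t : ℝ) = ∑ a ∈ A.support, (A a : ℝ) * (tri B (t - a) : ℝ) := by
    rw [tri_mprod_left]; push_cast; rfl
  have step1 : (1 - β) * (tri (mprod A B') t : ℝ) ≤ (tri (mprod A' B') t : ℝ) := by
    rw [e1, e2, Finset.mul_sum]
    refine Finset.sum_le_sum fun b _ => ?_
    have h := (hA (t - b)).1
    have hb : (0:ℝ) ≤ (B' b : ℝ) := Nat.cast_nonneg _
    calc (1 - β) * ((B' b : ℝ) * (tri A (t - b) : ℝ))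
        = (B' b : ℝ) * ((1 - β) * (tri A (t - b) : ℝ)) := by ring
      _ ≤ (B' b : ℝ) * (tri A' (t - b) : ℝ) := by
          exact mul_le_mul_of_nonneg_left h hb
  have step2 : (1 - γ) * (tri (mprod A B) t : ℝ) ≤ (tri (mprod A B') t : ℝ) := by
    rw [e3, e4, Finset.mul_sum]
    refine Finset.sum_le_sum fun a _ => ?_
    have h := (hB (t - a)).1
    have ha : (0:ℝ) ≤ (A a : ℝ) := Nat.cast_nonneg _
    calc (1 - γ) * ((A a : ℝ) * (tri B (t - a) : ℝ))
        = (A a : ℝ) * ((1 - γ) * (tri B (t - a) : ℝ)) := by ring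
      _ ≤ (A a : ℝ) * (tri B' (t - a) : ℝ) := mul_le_mul_of_nonneg_left h ha
  have hD : (0:ℝ) ≤ tri (mprod A B) t := Nat.cast_nonneg _
  nlinarith [mul_le_mul_of_nonneg_left step2 hβ1, mul_nonneg (mul_nonneg hβ0 hγ0) hD]
end

section
/- The SumProd FAQ-AI(1) answer can be recovered from the derived-semiring query: for a commutative semiring (R, ⊕, ⊗, I₀, I₁), functions F_i : ℝ → R and g_i : ℝ → ℝ, and a finite set of rows J ⊆ ℝ^d, let 𝓕_i(x_i) = {(g_i(x_i), F_i(x_i))} if F_i(x_i) ≠ I₀ and ∅ otherwise, and let Q̂ = ⊔_{x∈J} ⊓_{i=1}^d 𝓕_i(x_i) in the derived semiring. Then ⊕_{e ≤ L} #Q̂(e) = ⊕_{x ∈ J : Σ_i g_i(x_i) ≤ L} ⊗_{i=1}^d F_i(x_i). -/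
/-- The carrier of the derived semiring over a commutative semiring `R`. -/
abbrev DS (R : Type*) [CommSemiring R] := ℝ →₀ R

/-- The convolution product: #(A ⊓ B)(e) = ⊕_i #A(e−i) ⊗ #B(i). -/
noncomputable def dprod {R : Type*} [CommSemiring R] (A B : DS R) : DS R :=
  A.sum fun a u => B.sum fun b v => Finsupp.single (a + b) (u * v)

/-- The multiplicative identity {(0, I₁)}. -/
noncomputable def done (R : Type*) [CommSemiring R] : DS R := Finsupp.single 0 1

/-- Iterated convolution product of a list. -/
noncomputable def dprodList {R : Type*} [CommSemiring R] (l : List (DS R)) : DS R :=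
  l.foldr dprod (done R)

/-- 𝓕_i(x) = {(g_i(x), F_i(x))} if F_i(x) ≠ I₀, and ∅ otherwise. -/
noncomputable def liftF {R : Type*} [CommSemiring R] [DecidableEq R]
    (g : ℝ → ℝ) (F : ℝ → R) (x : ℝ) : DS R :=
  if F x = 0 then 0 else Finsupp.single (g x) (F x)

lemma liftF_eq {R : Type*} [CommSemiring R] [DecidableEq R]
    (g : ℝ → ℝ) (F : ℝ → R) (x : ℝ) : liftF g F x = Finsupp.single (g x) (F x) := by
  unfold liftF
  split <;> simp_all

lemma dprod_single_single {R : Type*} [CommSemiring R] (a b : ℝ) (u v : R) :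
    dprod (Finsupp.single a u) (Finsupp.single b v) = Finsupp.single (a + b) (u * v) := by
  unfold dprod
  rw [Finsupp.sum_single_index, Finsupp.sum_single_index]
  · simp
  · rw [Finsupp.sum_single_index] <;> simp

lemma dprodList_ofFn_single {R : Type*} [CommSemiring R] (d : ℕ) (a : Fin d → ℝ)
    (b : Fin d → R) :
    dprodList (List.ofFn fun i => Finsupp.single (a i) (b i)) =
      Finsupp.single (∑ i, a i) (∏ i, b i) := by
  induction d with
  | zero => simp [dprodList, done]
  | succ n ih =>
    rw [List.ofFn_succ]
    show dprod _ (dprodList _) = _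
    rw [ih, dprod_single_single, Fin.sum_univ_succ, Fin.prod_univ_succ]

lemma filter_support_sum {R : Type*} [CommSemiring R] (f : ℝ →₀ R) (P : ℝ → Prop)
    [DecidablePred P] :
    ∑ e ∈ f.support.filter P, f e = f.sum fun e v => if P e then v else 0 := by
  rw [Finsupp.sum, Finset.sum_filter]

theorem sumprod_faqai_recovery (R : Type*) [CommSemiring R] [DecidableEq R]
    (d : ℕ) (J : Finset (Fin d → ℝ)) (F : Fin d → ℝ → R) (g : Fin d → ℝ → ℝ) (L : ℝ) :
    (∑ e ∈ ((∑ x ∈ J, dprodList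
          (List.ofFn fun i : Fin d => liftF (g i) (F i) (x i))).support.filter
        (fun e => e ≤ L)),
        (∑ x ∈ J, dprodList (List.ofFn fun i : Fin d => liftF (g i) (F i) (x i))) e) =
      ∑ x ∈ J.filter (fun x => (∑ i : Fin d, g i (x i)) ≤ L), ∏ i : Fin d, F i (x i) := by
  classical
  have hQ : ∀ x : Fin d → ℝ,
      dprodList (List.ofFn fun i : Fin d => liftF (g i) (F i) (x i)) =
        Finsupp.single (∑ i, g i (x i)) (∏ i, F i (x i)) := by
    intro x
    simp only [liftF_eq]
    exact dprodList_ofFn_single d _ _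
  simp only [hQ]
  rw [filter_support_sum]
  rw [← Finsupp.sum_finset_sum_index (by intro a; simp) (by intro a u v; split <;> simp)]
  rw [Finset.sum_filter]
  refine Finset.sum_congr rfl fun x _ => ?_
  rw [Finsupp.sum_single_index (by simp)]
end

section
/- For the cross-product join J = {−w_1, w_1} × ⋯ × {−w_m, w_m} of m two-row tables (with all w_i positive integers), the number of rows x ∈ J satisfying both Σ_i x_i ≥ 0 and Σ_i (−x_i) ≥ 0 equals the number of sign vectors σ ∈ {−1,+1}^m with Σ_i σ_i w_i = 0, i.e., twice the number of ways (counting complements) to partition {w_1,…,w_m} into two parts of equal sum; in particular, this count is nonzero if and only if the Partition instance {w_1,…,w_m} has a solution. -/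
open Finset

private lemma mem_first_filter (m : ℕ) (w : Fin m → ℕ)
    (x : Fin m → ℝ) :
    x ∈ ((Fintype.piFinset fun i : Fin m => ({-(w i : ℝ), (w i : ℝ)} : Finset ℝ)).filter
        (fun x => 0 ≤ (∑ i : Fin m, x i) ∧ 0 ≤ (∑ i : Fin m, -(x i)))) ↔
      (∀ i, x i = -(w i : ℝ) ∨ x i = (w i : ℝ)) ∧ (∑ i : Fin m, x i) = 0 := by
  simp only [Finset.mem_filter, Fintype.mem_piFinset, Finset.mem_insert, Finset.mem_singleton,
    Finset.sum_neg_distrib, neg_nonneg]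
  constructor
  · rintro ⟨h1, h2, h3⟩
    exact ⟨h1, le_antisymm h3 h2⟩
  · rintro ⟨h1, h2⟩
    exact ⟨h1, by rw [h2], by rw [h2]⟩

theorem partition_reduction (m : ℕ) (w : Fin m → ℕ) (hw : ∀ i, 0 < w i) :
    -- the count of join rows satisfying both inequalities equals the number of
    -- sign vectors σ ∈ {−1,+1}^m with Σ_i σ_i w_i = 0
    ((Fintype.piFinset fun i : Fin m => ({-(w i : ℝ), (w i : ℝ)} : Finset ℝ)).filter
        (fun x => 0 ≤ (∑ i : Fin m, x i) ∧ 0 ≤ (∑ i : Fin m, -(x i)))).card =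
      ((Fintype.piFinset fun _ : Fin m => ({-1, 1} : Finset ℝ)).filter
        (fun σ => (∑ i : Fin m, σ i * (w i : ℝ)) = 0)).card ∧
    -- this count is nonzero iff the Partition instance has a solution
    (((Fintype.piFinset fun i : Fin m => ({-(w i : ℝ), (w i : ℝ)} : Finset ℝ)).filter
        (fun x => 0 ≤ (∑ i : Fin m, x i) ∧ 0 ≤ (∑ i : Fin m, -(x i)))).card ≠ 0 ↔
      ∃ T : Finset (Fin m), (∑ i ∈ T, w i) = ∑ i ∈ Tᶜ, w i) := by
  have hw' : ∀ i, (0:ℝ) < (w i : ℝ) := fun i => by exact_mod_cast hw i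
  have hwne : ∀ i, (w i : ℝ) ≠ 0 := fun i => (hw' i).ne'
  constructor
  · apply Finset.card_bij' (fun x _ => fun i => x i / (w i : ℝ))
      (fun σ _ => fun i => σ i * (w i : ℝ))
    · intro x hx
      rw [mem_first_filter] at hx
      simp only [Finset.mem_filter, Fintype.mem_piFinset, Finset.mem_insert, Finset.mem_singleton]
      constructor
      · intro i
        rcases hx.1 i with h | h
        · left; rw [h, neg_div, div_self (hwne i)]
        · right; rw [h, div_self (hwne i)]
      · have : ∀ i, x i / (w i : ℝ) * (w i : ℝ) = x i := fun i =>
          div_mul_cancel₀ _ (hwne i)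
        rw [Finset.sum_congr rfl (fun i _ => this i)]
        exact hx.2
    · intro σ hσ
      simp only [Finset.mem_filter, Fintype.mem_piFinset, Finset.mem_insert,
        Finset.mem_singleton] at hσ
      rw [mem_first_filter]
      constructor
      · intro i
        rcases hσ.1 i with h | h
        · left; rw [h]; ring
        · right; rw [h]; ring
      · exact hσ.2
    · intro x hx
      funext i
      exact div_mul_cancel₀ _ (hwne i)
    · intro σ hσ
      funext i
      exact mul_div_cancel_right₀ _ (hwne i)
  · rw [Ne, Finset.card_eq_zero, ← ne_eq, ← Finset.nonempty_iff_ne_empty]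
    constructor
    · rintro ⟨x, hx⟩
      rw [mem_first_filter] at hx
      classical
      refine ⟨Finset.univ.filter (fun i => x i = (w i : ℝ)), ?_⟩
      have hsum : (∑ i : Fin m, x i) =
          (∑ i ∈ Finset.univ.filter (fun i => x i = (w i : ℝ)), (w i : ℝ))
          - (∑ i ∈ (Finset.univ.filter (fun i => x i = (w i : ℝ)))ᶜ, (w i : ℝ)) := by
        rw [sub_eq_add_neg, ← Finset.sum_neg_distrib,
          ← Finset.sum_filter_add_sum_filter_not Finset.univ (fun i => x i = (w i : ℝ)) x]
        congr 1
        · exact Finset.sum_congr rfl (fun i hi => (Finset.mem_filter.mp hi).2)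
        · rw [Finset.compl_filter]
          refine Finset.sum_congr rfl (fun i hi => ?_)
          rcases hx.1 i with h | h
          · exact h
          · exact absurd h (Finset.mem_filter.mp hi).2
      have : (∑ i ∈ Finset.univ.filter (fun i => x i = (w i : ℝ)), (w i : ℝ))
          = ∑ i ∈ (Finset.univ.filter (fun i => x i = (w i : ℝ)))ᶜ, (w i : ℝ) := by
        have := hx.2
        rw [hsum] at this
        linarith
      exact_mod_cast this
    · rintro ⟨T, hT⟩
      classical
      refine ⟨fun i => if i ∈ T then (w i : ℝ) else -(w i : ℝ), ?_⟩
      rw [mem_first_filter]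
      constructor
      · intro i
        by_cases h : i ∈ T <;> simp [h]
      · have h1 : (∑ i : Fin m, (if i ∈ T then (w i : ℝ) else -(w i : ℝ)))
            = (∑ i ∈ T, (w i : ℝ)) + (∑ i ∈ Tᶜ, -(w i : ℝ)) := by
          rw [← Finset.sum_add_sum_compl T]
          congr 1
          · exact Finset.sum_congr rfl (fun i hi => if_pos hi)
          · exact Finset.sum_congr rfl (fun i hi => if_neg (Finset.mem_compl.mp hi))
        have h2 : (∑ i ∈ T, (w i : ℝ)) = ∑ i ∈ Tᶜ, (w i : ℝ) := by exact_mod_cast hT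
        rw [h1, Finset.sum_neg_distrib, h2]
        ring
end
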